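/- Let G be a cubic graph and M1, M2 disjoint matchings with |M1 ∪ M2| maximum. If two distinct components of G − M1 − M2 are both copies of K_{1,3}, then no edge of M1 ∪ M2 joins a vertex of one to a vertex of the other. -/

import Mathlib

open SimpleGraph

/-- A matching in `G` given as a set of edges: edges of `G`, pairwise vertex-disjoint. -/
def IsMatchingSet {V : Type*} (G : SimpleGraph V) (M : Set (Sym2 V)) : Prop :=
  M ⊆ G.edgeSet ∧ ∀ e ∈ M, ∀ f ∈ M, e ≠ f → ∀ v, v ∈ e → v ∉ f

/-- `M1, M2` are disjoint matchings of `G` with `|M1 ∪ M2|` maximum over all pairs of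
disjoint matchings of `G`. -/
def MaxDisjointPair {V : Type*} (G : SimpleGraph V) (M1 M2 : Set (Sym2 V)) : Prop :=
  IsMatchingSet G M1 ∧ IsMatchingSet G M2 ∧ Disjoint M1 M2 ∧
  ∀ N1 N2 : Set (Sym2 V), IsMatchingSet G N1 → IsMatchingSet G N2 → Disjoint N1 N2 →
    (N1 ∪ N2).ncard ≤ (M1 ∪ M2).ncard

/-- Adjacency in `Ĝ = G − M1 − M2`: adjacency via an edge of `G` not in `M1 ∪ M2`. -/
def hatAdj {V : Type*} (G : SimpleGraph V) (M1 M2 : Set (Sym2 V)) (x y : V) : Prop :=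
  G.Adj x y ∧ s(x, y) ∉ M1 ∪ M2

/-- The vertices `u, l 0, l 1, l 2` form a `K_{1,3}` connected component of
`Ĝ = G − M1 − M2`, with center `u` and leaves `l i`. -/
def IsK13Component {V : Type*} (G : SimpleGraph V) (M1 M2 : Set (Sym2 V))
    (u : V) (l : Fin 3 → V) : Prop :=
  Function.Injective l ∧ (∀ i, l i ≠ u) ∧ (∀ i, hatAdj G M1 M2 u (l i)) ∧
  (∀ w, hatAdj G M1 M2 u w → ∃ i, w = l i) ∧
  (∀ i w, hatAdj G M1 M2 (l i) w → w = u)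

/-- The center of a `K₁,₃` component of `Ĝ` is incident to no edge of `M1 ∪ M2`. -/
lemma center_free {V : Type*} [Fintype V] (G : SimpleGraph V) [DecidableRel G.Adj]
    (hcubic : ∀ v : V, G.degree v = 3) (M1 M2 : Set (Sym2 V))
    (hsub : M1 ∪ M2 ⊆ G.edgeSet)
    (u : V) (l : Fin 3 → V) (hinj : Function.Injective l)
    (hadj : ∀ i, hatAdj G M1 M2 u (l i)) :
    ∀ e ∈ M1 ∪ M2, u ∉ e := by
  classical
  intro e he hue
  obtain ⟨w, rfl⟩ := Sym2.mem_iff_exists.mp hue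
  have hadjw : G.Adj u w := (SimpleGraph.mem_edgeSet G).mp (hsub he)
  have hwl : ∀ i, w ≠ l i := by
    intro i h
    exact (hadj i).2 (h ▸ he)
  have hsubn : ({l 0, l 1, l 2, w} : Finset V) ⊆ G.neighborFinset u := by
    intro z hz
    rw [SimpleGraph.mem_neighborFinset]
    simp only [Finset.mem_insert, Finset.mem_singleton] at hz
    rcases hz with rfl | rfl | rfl | rfl
    · exact (hadj 0).1
    · exact (hadj 1).1
    · exact (hadj 2).1
    · exact hadjw
  have h01 : l 0 ≠ l 1 := fun h => by simpa using hinj h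
  have h02 : l 0 ≠ l 2 := fun h => by simpa using hinj h
  have h12 : l 1 ≠ l 2 := fun h => by simpa using hinj h
  have hcard : ({l 0, l 1, l 2, w} : Finset V).card = 4 := by
    rw [Finset.card_insert_of_notMem, Finset.card_insert_of_notMem,
      Finset.card_insert_of_notMem, Finset.card_singleton]
    · simp only [Finset.mem_singleton]; exact fun h => hwl 2 h.symm
    · simp only [Finset.mem_insert, Finset.mem_singleton]
      push_neg
      exact ⟨h12, fun h => hwl 1 h.symm⟩
    · simp only [Finset.mem_insert, Finset.mem_singleton]
      push_neg
      exact ⟨h01, h02, fun h => hwl 0 h.symm⟩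
  have hle := Finset.card_le_card hsubn
  rw [hcard, G.card_neighborFinset_eq_degree, hcubic u] at hle
  omega

/-- The key swap argument: if some edge of a maximal disjoint pair joins leaves of
two disjoint `K₁,₃` components, we can enlarge the pair, a contradiction. -/
lemma swap_lemma {V : Type*} [Fintype V] (G : SimpleGraph V) [DecidableRel G.Adj]
    (M1 M2 A B : Set (Sym2 V)) (hAB : A ∪ B = M1 ∪ M2)
    (hA : IsMatchingSet G A) (hB : IsMatchingSet G B) (hd : Disjoint A B)
    (hmax : ∀ N1 N2 : Set (Sym2 V), IsMatchingSet G N1 → IsMatchingSet G N2 → Disjoint N1 N2 →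
      (N1 ∪ N2).ncard ≤ (M1 ∪ M2).ncard)
    (u v a b : V)
    (hufree : ∀ e ∈ M1 ∪ M2, u ∉ e) (hvfree : ∀ e ∈ M1 ∪ M2, v ∉ e)
    (hua : G.Adj u a) (huaf : s(u, a) ∉ M1 ∪ M2)
    (hvb : G.Adj v b) (hvbf : s(v, b) ∉ M1 ∪ M2)
    (huv : u ≠ v) (hub : u ≠ b) (hav : a ≠ v) (hab : a ≠ b)
    (he : s(a, b) ∈ A) : False := by
  set e : Sym2 V := s(a, b) with hedef
  set e1 : Sym2 V := s(u, a) with he1def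
  set e2 : Sym2 V := s(v, b) with he2def
  have heM : e ∈ M1 ∪ M2 := hAB ▸ Or.inl he
  -- vertices of e1 are u, a ; of e2 are v, b ; all four distinct
  have he1e2 : e1 ≠ e2 := by
    intro h
    have : u ∈ e2 := h ▸ Sym2.mem_mk_left u a
    rw [he2def, Sym2.mem_iff] at this
    rcases this with h' | h' <;> [exact huv h'; exact hub h']
  -- old edges avoid u, a, v, b
  have hold : ∀ f ∈ A \ {e}, u ∉ f ∧ a ∉ f ∧ v ∉ f ∧ b ∉ f := by
    intro f hf
    have hfM : f ∈ M1 ∪ M2 := hAB ▸ Or.inl hf.1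
    have hfe : e ≠ f := fun h => hf.2 h.symm
    refine ⟨hufree f hfM, ?_, hvfree f hfM, ?_⟩
    · exact hA.2 e he f hf.1 hfe a (Sym2.mem_mk_left a b)
    · exact hA.2 e he f hf.1 hfe b (Sym2.mem_mk_right a b)
  set A' : Set (Sym2 V) := insert e1 (insert e2 (A \ {e})) with hA'def
  have hmem1 : ∀ z, z ∈ e1 → z = u ∨ z = a := fun z hz => Sym2.mem_iff.mp hz
  have hmem2 : ∀ z, z ∈ e2 → z = v ∨ z = b := fun z hz => Sym2.mem_iff.mp hz
  have h12 : ∀ z, z ∈ e1 → z ∉ e2 := by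
    intro z hz hz'
    rcases hmem1 z hz with rfl | rfl <;> rcases hmem2 z hz' with h | h
    · exact huv h
    · exact hub h
    · exact hav h
    · exact hab h
  have h1f : ∀ z, z ∈ e1 → ∀ f ∈ A \ {e}, z ∉ f := by
    intro z hz f hf hzf
    rcases hmem1 z hz with rfl | rfl
    · exact (hold f hf).1 hzf
    · exact (hold f hf).2.1 hzf
  have h2f : ∀ z, z ∈ e2 → ∀ f ∈ A \ {e}, z ∉ f := by
    intro z hz f hf hzf
    rcases hmem2 z hz with rfl | rfl
    · exact (hold f hf).2.2.1 hzf
    · exact (hold f hf).2.2.2 hzf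
  have hA' : IsMatchingSet G A' := by
    constructor
    · intro f hf
      rcases hf with rfl | rfl | hf
      · exact (SimpleGraph.mem_edgeSet G).mpr hua
      · exact (SimpleGraph.mem_edgeSet G).mpr hvb
      · exact hA.1 hf.1
    · intro f hf g hg hfg z hzf hzg
      rcases hf with rfl | rfl | hf <;> rcases hg with rfl | rfl | hg
      · exact hfg rfl
      · exact h12 z hzf hzg
      · exact h1f z hzf g hg hzg
      · exact h12 z hzg hzf
      · exact hfg rfl
      · exact h2f z hzf g hg hzg
      · exact h1f z hzg f hf hzf
      · exact h2f z hzg f hf hzf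
      · exact hA.2 f hf.1 g hg.1 hfg z hzf hzg
  have he1B : e1 ∉ B := fun h => huaf (hAB ▸ Or.inr h)
  have he2B : e2 ∉ B := fun h => hvbf (hAB ▸ Or.inr h)
  have hd' : Disjoint A' B := by
    rw [Set.disjoint_left]
    intro f hf hfB
    rcases hf with rfl | rfl | hf
    · exact he1B hfB
    · exact he2B hfB
    · exact (Set.disjoint_left.mp hd hf.1) hfB
  have key := hmax A' B hA' hB hd'
  rw [← hAB] at key
  -- compute cardinalities
  have heB : e ∉ B := Set.disjoint_left.mp hd he
  have hunion : A' ∪ B = insert e1 (insert e2 ((A ∪ B) \ {e})) := by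
    rw [hA'def]
    ext f
    simp only [Set.mem_union, Set.mem_insert_iff, Set.mem_diff, Set.mem_singleton_iff]
    constructor
    · rintro ((rfl | rfl | ⟨hf, hne⟩) | hf)
      · exact Or.inl rfl
      · exact Or.inr (Or.inl rfl)
      · exact Or.inr (Or.inr ⟨Or.inl hf, hne⟩)
      · exact Or.inr (Or.inr ⟨Or.inr hf, fun h => heB (h ▸ hf)⟩)
    · rintro (rfl | rfl | ⟨hf | hf, hne⟩)
      · exact Or.inl (Or.inl rfl)
      · exact Or.inl (Or.inr (Or.inl rfl))
      · exact Or.inl (Or.inr (Or.inr ⟨hf, hne⟩))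
      · exact Or.inr hf
  have he1AB : e1 ∉ A ∪ B := hAB ▸ huaf
  have he2AB : e2 ∉ A ∪ B := hAB ▸ hvbf
  have heAB : e ∈ A ∪ B := Or.inl he
  have hfin : (A ∪ B : Set (Sym2 V)).Finite := Set.toFinite _
  have hfin1 : ((A ∪ B) \ {e} : Set (Sym2 V)).Finite := hfin.diff
  have hc1 : ((A ∪ B) \ {e}).ncard = (A ∪ B).ncard - 1 :=
    Set.ncard_diff_singleton_of_mem heAB
  have hc2 : (insert e2 ((A ∪ B) \ {e})).ncard = ((A ∪ B) \ {e}).ncard + 1 :=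
    Set.ncard_insert_of_notMem (fun h => he2AB h.1) hfin1
  have hc3 : (insert e1 (insert e2 ((A ∪ B) \ {e}))).ncard
      = (insert e2 ((A ∪ B) \ {e})).ncard + 1 := by
    refine Set.ncard_insert_of_notMem ?_ (hfin1.insert _)
    rintro (h | h)
    · exact he1e2 h
    · exact he1AB h.1
  have hpos : 0 < (A ∪ B).ncard := (Set.ncard_pos hfin).mpr ⟨e, heAB⟩
  rw [hunion, hc3, hc2, hc1] at key
  omega

theorem stmt7 {V : Type*} [Fintype V] (G : SimpleGraph V) [DecidableRel G.Adj]
    (hcubic : ∀ v : V, G.degree v = 3) (M1 M2 : Set (Sym2 V))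
    (hmax : MaxDisjointPair G M1 M2)
    (u : V) (l : Fin 3 → V) (hu : IsK13Component G M1 M2 u l)
    (v : V) (m : Fin 3 → V) (hv : IsK13Component G M1 M2 v m)
    (hdisj : ({u} ∪ Set.range l) ∩ ({v} ∪ Set.range m) = (∅ : Set V)) :
    ∀ x ∈ ({u} ∪ Set.range l : Set V), ∀ y ∈ ({v} ∪ Set.range m : Set V),
      s(x, y) ∉ M1 ∪ M2 := by
  obtain ⟨hM1, hM2, hdM, hmaxcard⟩ := hmax
  have hsub : M1 ∪ M2 ⊆ G.edgeSet := Set.union_subset hM1.1 hM2.1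
  have hufree : ∀ e ∈ M1 ∪ M2, u ∉ e :=
    center_free G hcubic M1 M2 hsub u l hu.1 hu.2.2.1
  have hvfree : ∀ e ∈ M1 ∪ M2, v ∉ e :=
    center_free G hcubic M1 M2 hsub v m hv.1 hv.2.2.1
  have hdd : ∀ a : V, a ∈ ({u} ∪ Set.range l : Set V) →
      a ∈ ({v} ∪ Set.range m : Set V) → False := by
    intro a h1 h2
    exact Set.eq_empty_iff_forall_notMem.mp hdisj a ⟨h1, h2⟩
  intro x hx y hy hmem
  -- x cannot be u, y cannot be v
  rcases hx with hx | ⟨i, rfl⟩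
  · rw [Set.mem_singleton_iff] at hx
    subst hx
    exact hufree _ hmem (Sym2.mem_mk_left x y)
  rcases hy with hy | ⟨j, rfl⟩
  · rw [Set.mem_singleton_iff] at hy
    subst hy
    exact hvfree _ hmem (Sym2.mem_mk_right (l i) y)
  -- distinctness
  have huv : u ≠ v := fun h => hdd u (Or.inl rfl) (Or.inl h)
  have hub : u ≠ m j := fun h => hdd u (Or.inl rfl) (Or.inr ⟨j, h.symm⟩)
  have hav : l i ≠ v := fun h => hdd (l i) (Or.inr ⟨i, rfl⟩) (Or.inl h)
  have hab : l i ≠ m j := fun h => hdd (l i) (Or.inr ⟨i, rfl⟩) (Or.inr ⟨j, h.symm⟩)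
  rcases hmem with hmem | hmem
  · exact swap_lemma G M1 M2 M1 M2 rfl hM1 hM2 hdM hmaxcard u v (l i) (m j)
      hufree hvfree (hu.2.2.1 i).1 (hu.2.2.1 i).2 (hv.2.2.1 j).1 (hv.2.2.1 j).2
      huv hub hav hab hmem
  · exact swap_lemma G M1 M2 M2 M1 (Set.union_comm M2 M1) hM2 hM1 hdM.symm
      (fun N1 N2 h1 h2 hd => hmaxcard N1 N2 h1 h2 hd) u v (l i) (m j)
      hufree hvfree (hu.2.2.1 i).1 (hu.2.2.1 i).2 (hv.2.2.1 j).1 (hv.2.2.1 j).2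
      huv hub hav hab hmem
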